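/- Let K be a field, A an n×n matrix over K with characteristic polynomial factorization χ_A = f_1^{m_1}···f_q^{m_q} into pairwise distinct monic irreducible factors, and let g_p = χ_A / f_p^{m_p}. Fix j ∈ {1,…,n} and p ∈ {1,…,q}, and let r_{j,p} be the multiplicity of f_p in the minimal annihilating polynomial π_{A,e_j} of the unit vector e_j. Then f_p(A)^{m_p} g_p(A) e_j = 0, and r_{j,p} is the minimum natural number k such that f_p(A)^k g_p(A) e_j = 0. -/
import Mathlib


open Polynomial Matrix

/-- Let `χ_A = f_1^{m_1} ⋯ f_q^{m_q}` be the irreducible factorization of the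
characteristic polynomial, `g_p = χ_A / f_p^{m_p}`, and let `r` be the multiplicity of
`f_p` in the minimal annihilating polynomial of the unit vector `e_j`. Then
`f_p(A)^{m_p} g_p(A) e_j = 0` and `r` is the least `k` with `f_p(A)^k g_p(A) e_j = 0`. -/
theorem multiplicity_is_least_annihilating_power
    (K : Type*) [Field K] (n q : ℕ)
    (A : Matrix (Fin n) (Fin n) K)
    (f : Fin q → K[X]) (m : Fin q → ℕ)
    (hfmonic : ∀ p, (f p).Monic) (hfirr : ∀ p, Irreducible (f p))
    (hfdist : Function.Injective f) (hm : ∀ p, 1 ≤ m p)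
    (hfact : A.charpoly = ∏ p, (f p) ^ (m p))
    (p : Fin q) (g : K[X]) (hg : g * (f p) ^ (m p) = A.charpoly)
    (j : Fin n) (π : K[X]) (hmonic : π.Monic)
    (hmin : ∀ h : K[X],
      (Polynomial.aeval A h).mulVec (Pi.single j 1) = 0 ↔ π ∣ h)
    (r : ℕ) (hr : (f p) ^ r ∣ π) (hr' : ¬ (f p) ^ (r + 1) ∣ π) :
    ((Polynomial.aeval A (f p)) ^ (m p) * Polynomial.aeval A g).mulVec
        (Pi.single j 1) = 0 ∧
      IsLeast {k : ℕ |
        ((Polynomial.aeval A (f p)) ^ k * Polynomial.aeval A g).mulVec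
          (Pi.single j 1) = 0} r := by
  have hprime : Prime (f p) := (hfirr p).prime
  have hfne : f p ≠ 0 := hprime.ne_zero
  -- rewrite membership condition
  have key : ∀ k : ℕ,
      ((Polynomial.aeval A (f p)) ^ k * Polynomial.aeval A g).mulVec
        (Pi.single j 1) = 0 ↔ π ∣ (f p) ^ k * g := by
    intro k
    rw [← _root_.map_pow, ← _root_.map_mul]
    exact hmin _
  -- π divides charpoly
  have hcayley : (Polynomial.aeval A A.charpoly).mulVec (Pi.single j 1) = 0 := by
    rw [A.aeval_self_charpoly, Matrix.zero_mulVec]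
  have hπchar : π ∣ A.charpoly := (hmin _).mp hcayley
  -- f p does not divide g
  have hfg : ¬ f p ∣ g := by
    have hcancel : g = ∏ i ∈ Finset.univ.erase p, (f i) ^ (m i) := by
      have h1 : (∏ i ∈ Finset.univ.erase p, (f i) ^ (m i)) * (f p) ^ (m p)
          = A.charpoly := by
        rw [hfact, mul_comm]
        exact Finset.mul_prod_erase Finset.univ (fun i => f i ^ m i) (Finset.mem_univ p)
      have := hg.trans h1.symm
      exact mul_right_cancel₀ (pow_ne_zero _ hfne) this
    intro hdvd
    rw [hcancel] at hdvd
    obtain ⟨i, hi, hdvd⟩ := hprime.exists_mem_finset_dvd hdvd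
    have : f p ∣ f i := hprime.dvd_of_dvd_pow hdvd
    have hassoc : Associated (f p) (f i) :=
      (hfirr p).associated_of_dvd (hfirr i) this
    have : f p = f i := Polynomial.eq_of_monic_of_associated (hfmonic p) (hfmonic i) hassoc
    exact (Finset.mem_erase.mp hi).1 (hfdist this).symm
  obtain ⟨π', hπ'⟩ := hr
  have hfπ' : ¬ f p ∣ π' := by
    intro hdvd
    exact hr' (by rw [hπ', pow_succ]; exact mul_dvd_mul_left _ hdvd)
  have hcop : IsCoprime (f p) π' := ((hfirr p).coprime_iff_not_dvd).mpr hfπ'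
  -- π' divides g
  have hπ'g : π' ∣ g := by
    have h1 : π' ∣ (f p) ^ (m p) * g := by
      have hπ'π : π' ∣ π := ⟨(f p) ^ r, by rw [hπ']; ring⟩
      refine hπ'π.trans ?_
      rw [mul_comm] at hg
      exact hg ▸ hπchar
    exact ((hcop.symm.pow_right).dvd_of_dvd_mul_left h1)
  constructor
  · rw [key]
    rw [mul_comm] at hg
    exact hg ▸ hπchar
  · constructor
    · rw [Set.mem_setOf_eq, key, hπ']
      exact mul_dvd_mul_left _ hπ'g
    · intro k hk
      rw [Set.mem_setOf_eq, key] at hk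
      by_contra hlt
      push_neg at hlt
      have h1 : (f p) ^ (k + 1) ∣ (f p) ^ k * g := by
        refine dvd_trans (pow_dvd_pow _ hlt) ?_
        exact dvd_trans (hπ' ▸ dvd_mul_right _ _) hk
      rw [pow_succ] at h1
      have h2 : f p ∣ g := (mul_dvd_mul_iff_left (pow_ne_zero k hfne)).mp h1
      exact hfg h2
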